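/- Work in L²((−1,1), ℂ) with inner product ⟨g, h⟩ = ∫_{−1}^{1} conj(g)·h. Let e_k^a(x) := (1/√2)·exp(iπ(k + 1/2)x) for k ∈ ℤ (the antiperiodic Hilbert basis), and let e_k^D(x) := sin((kπ/2)(x + 1)) for integers k ≥ 1 (the Dirichlet sine Hilbert basis). Let C ∈ L²((−1,1)) be real-valued and even, and let u ∈ L²((−1,1), ℂ) be even (u(−x) = u(x) a.e.). Then, with equality in L²: ∑'_{k∈ℤ} ⟨e_k^a, C⟩·⟨e_k^a, u⟩ • e_k^a = ∑'_{k∈ℕ} ⟨e_k^a, C⟩·⟨e_{2k+1}^D, u⟩ • e_{2k+1}^D. -/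

import Mathlib

open MeasureTheory

namespace Stmt17Aux

noncomputable abbrev μ0 : Measure ℝ := volume.restrict (Set.Ioo (-1 : ℝ) 1)

lemma negPreserving : MeasurePreserving (Neg.neg : ℝ → ℝ) μ0 μ0 := by
  refine ⟨measurable_neg, ?_⟩
  have h : (Neg.neg ⁻¹' Set.Ioo (-1:ℝ) 1 : Set ℝ) = Set.Ioo (-1:ℝ) 1 := by
    ext x
    simp only [Set.mem_preimage, Set.mem_Ioo]
    constructor <;> (intro h; constructor <;> linarith [h.1, h.2])
  calc Measure.map Neg.neg (volume.restrict (Set.Ioo (-1:ℝ) 1))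
      = Measure.map Neg.neg (volume.restrict (Neg.neg ⁻¹' Set.Ioo (-1:ℝ) 1)) := by rw [h]
    _ = (Measure.map Neg.neg volume).restrict (Set.Ioo (-1:ℝ) 1) :=
        (Measure.restrict_map measurable_neg measurableSet_Ioo).symm
    _ = volume.restrict (Set.Ioo (-1:ℝ) 1) := by rw [Measure.map_neg_eq_self]

/-- The exponential functions. -/
noncomputable def E (j : ℤ) (x : ℝ) : ℂ :=
  (Real.sqrt 2 : ℂ)⁻¹ * Complex.exp (Complex.I * Real.pi * ((j : ℂ) + 1 / 2) * (x : ℂ))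

lemma E_neg (j : ℤ) (x : ℝ) : E j (-x) = E (-1 - j) x := by
  unfold E
  congr 1
  congr 1
  push_cast
  ring

lemma keyTrig (k : ℕ) (x : ℝ) :
    (Real.sin ((((2*k : ℕ) : ℝ) + 1) * Real.pi / 2 * (x + 1)) : ℂ)
    = ((-1)^k * (Real.sqrt 2 : ℂ)⁻¹) * (E (k : ℤ) x + E (-1 - (k:ℤ)) x) := by
  unfold E
  set t : ℝ := ((k:ℝ) + 1/2) * Real.pi * x with ht
  have hang : (((2*k : ℕ) : ℝ) + 1) * Real.pi / 2 * (x + 1) = (t + Real.pi/2) + k * Real.pi := by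
    push_cast; ring
  have h1 : Complex.I * Real.pi * (((k:ℤ) : ℂ) + 1/2) * x = (t : ℂ) * Complex.I := by
    rw [ht]; push_cast; ring
  have h2 : Complex.I * Real.pi * ((((-1 - (k:ℤ)) : ℤ) : ℂ) + 1/2) * x = (-(t:ℂ)) * Complex.I := by
    rw [ht]; push_cast; ring
  have hs : ((Real.sqrt 2 : ℂ))⁻¹ * ((Real.sqrt 2 : ℂ))⁻¹ = 2⁻¹ := by
    have h2' : ((Real.sqrt 2 : ℂ)) * ((Real.sqrt 2 : ℂ)) = 2 := by
      norm_cast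
      exact Real.mul_self_sqrt (by norm_num)
    rw [← mul_inv, h2']
  rw [hang, Real.sin_add_nat_mul_pi, Real.sin_add_pi_div_two, h1, h2,
    Complex.exp_mul_I, Complex.exp_mul_I, Complex.cos_neg, Complex.sin_neg]
  have hr : ((-1:ℂ)^k * (Real.sqrt 2 : ℂ)⁻¹) *
      ((Real.sqrt 2 : ℂ)⁻¹ * (Complex.cos t + Complex.sin t * Complex.I)
       + (Real.sqrt 2 : ℂ)⁻¹ * (Complex.cos t + -Complex.sin t * Complex.I))
      = (-1)^k * ((Real.sqrt 2 : ℂ)⁻¹ * (Real.sqrt 2 : ℂ)⁻¹) * (2 * Complex.cos t) := by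
    ring
  rw [hr, hs, ← Complex.ofReal_cos]
  push_cast
  ring

lemma inner_repr (ea : HilbertBasis ℤ ℂ (Lp ℂ 2 μ0))
    (hea : ∀ k : ℤ, ((ea k : Lp ℂ 2 μ0) : ℝ → ℂ) =ᵐ[μ0] fun x : ℝ => E k x)
    (f : Lp ℂ 2 μ0) (j : ℤ) :
    (inner ℂ (ea j : Lp ℂ 2 μ0) f : ℂ) = ∫ x, (starRingEnd ℂ) (E j x) * f x ∂μ0 := by
  rw [MeasureTheory.L2.inner_def]
  refine integral_congr_ae ?_
  filter_upwards [hea j] with x hx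
  rw [RCLike.inner_apply, hx, mul_comm]

lemma coeff_symm (ea : HilbertBasis ℤ ℂ (Lp ℂ 2 μ0))
    (hea : ∀ k : ℤ, ((ea k : Lp ℂ 2 μ0) : ℝ → ℂ) =ᵐ[μ0] fun x : ℝ => E k x)
    (f : Lp ℂ 2 μ0) (hf : ∀ᵐ x ∂μ0, f (-x) = f x) (k : ℤ) :
    (inner ℂ (ea (-1 - k) : Lp ℂ 2 μ0) f : ℂ) = inner ℂ (ea k : Lp ℂ 2 μ0) f := by
  rw [inner_repr ea hea f k, inner_repr ea hea f (-1 - k)]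
  have hcomp := negPreserving.integral_comp (MeasurableEquiv.neg ℝ).measurableEmbedding
    (fun x => (starRingEnd ℂ) (E k x) * f x)
  calc ∫ x, (starRingEnd ℂ) (E (-1 - k) x) * f x ∂μ0
      = ∫ x, (starRingEnd ℂ) (E k (-x)) * f x ∂μ0 := by
        refine integral_congr_ae (Filter.Eventually.of_forall fun x => ?_)
        simp only []
        rw [E_neg k x]
    _ = ∫ x, (starRingEnd ℂ) (E k (-x)) * f (-x) ∂μ0 := by
        refine integral_congr_ae ?_
        filter_upwards [hf] with x hx
        rw [hx]
    _ = ∫ x, (starRingEnd ℂ) (E k x) * f x ∂μ0 := hcomp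

lemma eD_eq (eD : HilbertBasis ℕ ℂ (Lp ℂ 2 μ0))
    (heD : ∀ n : ℕ, ((eD n : Lp ℂ 2 μ0) : ℝ → ℂ) =ᵐ[μ0]
      fun x : ℝ => (Real.sin (((n : ℝ) + 1) * Real.pi / 2 * (x + 1)) : ℂ))
    (ea : HilbertBasis ℤ ℂ (Lp ℂ 2 μ0))
    (hea : ∀ k : ℤ, ((ea k : Lp ℂ 2 μ0) : ℝ → ℂ) =ᵐ[μ0] fun x : ℝ => E k x)
    (k : ℕ) :
    (eD (2*k) : Lp ℂ 2 μ0) = ((-1)^k * (Real.sqrt 2 : ℂ)⁻¹) •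
      ((ea (k : ℤ) : Lp ℂ 2 μ0) + (ea (-1 - (k:ℤ)) : Lp ℂ 2 μ0)) := by
  apply Lp.ext
  have h1 := Lp.coeFn_smul ((-1:ℂ)^k * (Real.sqrt 2:ℂ)⁻¹)
    ((ea (k:ℤ) : Lp ℂ 2 μ0) + (ea (-1-(k:ℤ)) : Lp ℂ 2 μ0))
  have h2 := Lp.coeFn_add (ea (k:ℤ) : Lp ℂ 2 μ0) (ea (-1-(k:ℤ)) : Lp ℂ 2 μ0)
  filter_upwards [heD (2*k), hea (k:ℤ), hea (-1-(k:ℤ)), h1, h2] with x hx1 hx2 hx3 hx4 hx5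
  rw [hx1, hx4, Pi.smul_apply, hx5, Pi.add_apply, hx2, hx3, smul_eq_mul]
  exact keyTrig k x

end Stmt17Aux

open Stmt17Aux in

/-- In `L²((−1,1), ℂ)`, let `ea` be the antiperiodic Hilbert basis
(`ea k = (1/√2)e^{iπ(k+1/2)x}`, `k ∈ ℤ`) and `eD` the Dirichlet sine Hilbert basis,
indexed here by `n ∈ ℕ` with `eD n = sin(((n+1)π/2)(x+1))` (so `eD n` is the
eigenfunction `e^D_{n+1}`). If `C` is real-valued and even and `u` is even, then
`∑'_{k∈ℤ} ⟨ea k, C⟩⟨ea k, u⟩ • ea k = ∑'_{k∈ℕ} ⟨ea k, C⟩⟨e^D_{2k+1}, u⟩ • e^D_{2k+1}`,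
the right-hand side being `∑'_{k∈ℕ} ⟨ea k, C⟩⟨eD (2k), u⟩ • eD (2k)`. -/
theorem stmt_17
    (ea : HilbertBasis ℤ ℂ (Lp ℂ 2 (volume.restrict (Set.Ioo (-1 : ℝ) 1))))
    (hea : ∀ k : ℤ, (ea k : ℝ → ℂ) =ᵐ[volume.restrict (Set.Ioo (-1 : ℝ) 1)]
      fun x : ℝ => (Real.sqrt 2 : ℂ)⁻¹ *
        Complex.exp (Complex.I * Real.pi * ((k : ℂ) + 1 / 2) * (x : ℂ)))
    (eD : HilbertBasis ℕ ℂ (Lp ℂ 2 (volume.restrict (Set.Ioo (-1 : ℝ) 1))))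
    (heD : ∀ n : ℕ, (eD n : ℝ → ℂ) =ᵐ[volume.restrict (Set.Ioo (-1 : ℝ) 1)]
      fun x : ℝ => (Real.sin (((n : ℝ) + 1) * Real.pi / 2 * (x + 1)) : ℂ))
    (C u : Lp ℂ 2 (volume.restrict (Set.Ioo (-1 : ℝ) 1)))
    (hCreal : ∀ᵐ x ∂(volume.restrict (Set.Ioo (-1 : ℝ) 1)), (C x).im = 0)
    (hCeven : ∀ᵐ x ∂(volume.restrict (Set.Ioo (-1 : ℝ) 1)), C (-x) = C x)
    (hueven : ∀ᵐ x ∂(volume.restrict (Set.Ioo (-1 : ℝ) 1)), u (-x) = u x) :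
    (∑' k : ℤ, ((inner ℂ (ea k) C : ℂ) * (inner ℂ (ea k) u : ℂ)) • ea k)
      = ∑' k : ℕ, ((inner ℂ (ea (k : ℤ)) C : ℂ) * (inner ℂ (eD (2 * k)) u : ℂ))
          • eD (2 * k) := by
  have hea' : ∀ k : ℤ, ((ea k : Lp ℂ 2 μ0) : ℝ → ℂ) =ᵐ[μ0] fun x : ℝ => E k x := hea
  set f : ℤ → Lp ℂ 2 μ0 :=
    fun j => ((inner ℂ (ea j) C : ℂ) * (inner ℂ (ea j) u : ℂ)) • (ea j : Lp ℂ 2 μ0) with hf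
  -- summability
  have hnorm1 : ∀ j : ℤ, ‖(ea j : Lp ℂ 2 μ0)‖ = 1 := fun j => ea.orthonormal.1 j
  have hbound : ∀ j : ℤ, ‖f j‖ ≤
      (‖(inner ℂ (ea j : Lp ℂ 2 μ0) C : ℂ)‖^2 + ‖(inner ℂ (ea j : Lp ℂ 2 μ0) u : ℂ)‖^2)/2 := by
    intro j
    rw [hf]
    simp only []
    rw [norm_smul, hnorm1 j, mul_one, norm_mul]
    nlinarith [sq_nonneg (‖(inner ℂ (ea j : Lp ℂ 2 μ0) C : ℂ)‖ - ‖(inner ℂ (ea j : Lp ℂ 2 μ0) u : ℂ)‖),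
      norm_nonneg (inner ℂ (ea j : Lp ℂ 2 μ0) C : ℂ), norm_nonneg (inner ℂ (ea j : Lp ℂ 2 μ0) u : ℂ)]
  have hsummable : Summable f := by
    refine Summable.of_norm (Summable.of_nonneg_of_le (fun j => norm_nonneg _) hbound ?_)
    exact ((ea.orthonormal.inner_products_summable (x := C)).add
      (ea.orthonormal.inner_products_summable (x := u))).div_const 2
  have h1 : Summable (fun k : ℕ => f (k : ℤ)) :=
    hsummable.comp_injective (fun a b h => by exact_mod_cast h)
  have h2 : Summable (fun k : ℕ => f (-((k : ℤ) + 1))) :=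
    hsummable.comp_injective (fun a b h => by omega)
  -- coefficient symmetry
  have hCsymm : ∀ k : ℤ, (inner ℂ (ea (-1 - k) : Lp ℂ 2 μ0) C : ℂ) = inner ℂ (ea k : Lp ℂ 2 μ0) C :=
    coeff_symm ea hea' C hCeven
  have husymm : ∀ k : ℤ, (inner ℂ (ea (-1 - k) : Lp ℂ 2 μ0) u : ℂ) = inner ℂ (ea k : Lp ℂ 2 μ0) u :=
    coeff_symm ea hea' u hueven
  -- per-term identity
  have hterm : ∀ k : ℕ, ((inner ℂ (ea (k : ℤ)) C : ℂ) * (inner ℂ (eD (2 * k)) u : ℂ))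
      • (eD (2 * k) : Lp ℂ 2 μ0) = f (k : ℤ) + f (-((k : ℤ) + 1)) := by
    intro k
    set c : ℂ := (-1)^k * (Real.sqrt 2 : ℂ)⁻¹ with hc
    have hconj : (starRingEnd ℂ) c = c := by
      rw [hc]
      simp [map_mul, map_pow, map_inv₀, Complex.conj_ofReal]
    have hcc : (2:ℂ) * (c * c) = 1 := by
      have h2' : ((Real.sqrt 2 : ℂ)) * ((Real.sqrt 2 : ℂ)) = 2 := by
        norm_cast
        exact Real.mul_self_sqrt (by norm_num)
      have hpow : ((-1:ℂ)^k) * ((-1:ℂ)^k) = 1 := by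
        rw [← pow_add, ← two_mul, pow_mul]
        norm_num
      rw [hc]
      field_simp
      rw [sq, sq, hpow, h2', mul_one]
    have hidx : (-(((k:ℕ) : ℤ) + 1)) = -1 - (k : ℤ) := by ring
    rw [eD_eq eD heD ea hea' k, inner_smul_left, inner_add_left, hconj,
      husymm (k : ℤ)]
    rw [hf]
    simp only []
    rw [hidx, hCsymm (k:ℤ), husymm (k:ℤ), smul_smul, ← smul_add]
    congr 1
    have : (inner ℂ (ea (k:ℤ)) C : ℂ) * (c * ((inner ℂ (ea (k:ℤ)) u : ℂ) + (inner ℂ (ea (k:ℤ)) u : ℂ))) * c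
        = ((inner ℂ (ea (k:ℤ)) C : ℂ) * (inner ℂ (ea (k:ℤ)) u : ℂ)) * ((2:ℂ) * (c * c)) := by ring
    rw [this, hcc, mul_one]
  calc (∑' j : ℤ, f j)
      = (∑' k : ℕ, f (k : ℤ)) + ∑' k : ℕ, f (-((k : ℤ) + 1)) :=
        tsum_of_nat_of_neg_add_one h1 h2
    _ = ∑' k : ℕ, (f (k : ℤ) + f (-((k : ℤ) + 1))) := (Summable.tsum_add h1 h2).symm
    _ = ∑' k : ℕ, ((inner ℂ (ea (k : ℤ)) C : ℂ) * (inner ℂ (eD (2 * k)) u : ℂ)) • (eD (2 * k) : Lp ℂ 2 μ0) :=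
        tsum_congr fun k => (hterm k).symm
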